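/- Fix a matrix A ∈ ℝ^{M×N}, a subset Λ ⊆ {1,…,N} with |Λ| = τ ≥ 1, and an index k ∉ Λ; write μ_{k,n} = ⟨A_k, A_n⟩. Let w ∈ ℝ^M be a fixed vector with |⟨A_k, w⟩| ≤ β for some β ≥ 0. Let s₁,…,s_N be independent real random variables with E[s_n] = 0 for all n and s_n = 0 almost surely for n ∉ Λ, and suppose constants c ≥ 0 and ν ≥ 0 satisfy |μ_{k,n} s_n| ≤ c almost surely and E[μ_{k,n}² s_n²] ≤ ν for every n ∈ Λ. Then for any s_min with ρ := s_min/2 − β > 0, the probability that |⟨A_k, A s + w⟩| ≥ s_min/2 is at most 2·exp( −ρ² / (2(τν + cρ/3)) ). -/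

import Mathlib

open MeasureTheory ProbabilityTheory Real Finset Nat

lemma fact_ge_two_mul_pow (i : ℕ) : 2 * 3 ^ i ≤ (i + 2)! := by
  induction i with
  | zero => simp [Nat.factorial]
  | succ n ih =>
    have : (n + 3)! = (n + 3) * (n + 2)! := rfl
    calc 2 * 3 ^ (n + 1) = 3 * (2 * 3 ^ n) := by ring
    _ ≤ 3 * (n + 2)! := by omega
    _ ≤ (n + 3) * (n + 2)! := by
        have : (3:ℕ) ≤ n + 3 := by omega
        exact Nat.mul_le_mul_right _ this
    _ = (n + 3)! := rfl

lemma exp_quad_bound {x a : ℝ} (hx : |x| ≤ a) (ha : a < 3) :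
    Real.exp x ≤ 1 + x + x ^ 2 / (2 * (1 - a / 3)) := by
  have ha0 : 0 ≤ a := (abs_nonneg x).trans hx
  have hsum : Summable (fun n : ℕ => x ^ n / n !) := Real.summable_pow_div_factorial x
  have hexp : Real.exp x = ∑' n : ℕ, x ^ n / n ! := by
    rw [Real.exp_eq_exp_ℝ, NormedSpace.exp_eq_tsum_div]
  have hsplit : (∑ i ∈ range 2, x ^ i / i !) + (∑' i : ℕ, x ^ (i + 2) / (i + 2)!)
      = ∑' n : ℕ, x ^ n / n ! := Summable.sum_add_tsum_nat_add 2 hsum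
  have hr : a / 3 < 1 := by linarith
  have hr0 : 0 ≤ a / 3 := by linarith
  have hgs : Summable (fun i : ℕ => x ^ 2 / 2 * (a / 3) ^ i) :=
    (summable_geometric_of_lt_one hr0 hr).mul_left _
  have hterm : ∀ i : ℕ, x ^ (i + 2) / (i + 2)! ≤ x ^ 2 / 2 * (a / 3) ^ i := by
    intro i
    have hx2 : x ^ (i + 2) ≤ |x| ^ (i + 2) := by
      rw [← abs_pow]; exact le_abs_self _
    have hfpos : (0:ℝ) < ((i + 2)! : ℝ) := by exact_mod_cast (i+2).factorial_pos
    have h1 : x ^ (i + 2) / (i + 2)! ≤ |x| ^ (i + 2) / (i + 2)! :=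
      (div_le_div_iff_of_pos_right hfpos).mpr hx2
    refine h1.trans ?_
    have h2 : |x| ^ (i + 2) = x ^ 2 * |x| ^ i := by
      rw [pow_add, sq_abs]; ring
    have h3 : |x| ^ i ≤ a ^ i := pow_le_pow_left₀ (abs_nonneg x) hx i
    have h4 : (2 * 3 ^ i : ℝ) ≤ ((i + 2)! : ℝ) := by
      exact_mod_cast fact_ge_two_mul_pow i
    have h5 : (0:ℝ) < 2 * 3 ^ i := by positivity
    calc |x| ^ (i + 2) / (i + 2)! ≤ (x ^ 2 * a ^ i) / (2 * 3 ^ i) := by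
          rw [h2]
          exact div_le_div₀ (by positivity)
            (mul_le_mul_of_nonneg_left h3 (sq_nonneg x)) h5 h4
    _ = x ^ 2 / 2 * (a / 3) ^ i := by rw [div_pow]; ring
  have hsum2 : Summable (fun i : ℕ => x ^ (i + 2) / (i + 2)!) :=
    (summable_nat_add_iff 2).mpr hsum
  have htail : (∑' i : ℕ, x ^ (i + 2) / (i + 2)!) ≤ x ^ 2 / (2 * (1 - a / 3)) := by
    calc (∑' i : ℕ, x ^ (i + 2) / (i + 2)!) ≤ ∑' i : ℕ, x ^ 2 / 2 * (a / 3) ^ i :=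
          Summable.tsum_le_tsum hterm hsum2 hgs
    _ = x ^ 2 / 2 * (1 - a / 3)⁻¹ := by rw [tsum_mul_left, tsum_geometric_of_lt_one hr0 hr]
    _ = x ^ 2 / (2 * (1 - a / 3)) := by rw [div_mul_eq_div_div_swap]; ring
  have hhead : (∑ i ∈ range 2, x ^ i / i !) = 1 + x := by
    simp [Finset.sum_range_succ, Nat.factorial]
  rw [hexp, ← hsplit, hhead]
  linarith

lemma mgf_bernstein {Ω : Type*} [MeasurableSpace Ω] (P : Measure Ω) [IsProbabilityMeasure P]
    (X : Ω → ℝ) (hX : Measurable X) (hcent : ∫ ω, X ω ∂P = 0)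
    {c v t : ℝ} (hb : ∀ᵐ ω ∂P, |X ω| ≤ c)
    (hv : ∫ ω, (X ω) ^ 2 ∂P ≤ v) (ht : 0 ≤ t) (htc : t * c < 3) :
    mgf X P t ≤ Real.exp (t ^ 2 * v / (2 * (1 - t * c / 3))) := by
  have hc : 0 ≤ c := by
    obtain ⟨ω, hω⟩ := hb.exists
    exact (abs_nonneg _).trans hω
  have hD : 0 < 2 * (1 - t * c / 3) := by nlinarith
  have hintX : Integrable X P :=
    ⟨hX.aestronglyMeasurable, HasFiniteIntegral.of_bounded (C := c) (by
      filter_upwards [hb] with ω hω; simpa using hω)⟩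
  have hintX2 : Integrable (fun ω => (X ω) ^ 2) P :=
    ⟨(hX.pow_const 2).aestronglyMeasurable, HasFiniteIntegral.of_bounded (C := c ^ 2) (by
      filter_upwards [hb] with ω hω
      have := sq_abs (X ω)
      simp only [Real.norm_eq_abs, abs_pow]
      calc |X ω| ^ 2 ≤ c ^ 2 := by nlinarith [abs_nonneg (X ω)]
      )⟩
  have hv0 : 0 ≤ v := le_trans (integral_nonneg fun ω => sq_nonneg _) hv
  have hintexp : Integrable (fun ω => Real.exp (t * X ω)) P :=
    ⟨((hX.const_mul t).exp).aestronglyMeasurable, HasFiniteIntegral.of_bounded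
      (C := Real.exp (t * c)) (by
        filter_upwards [hb] with ω hω
        rw [Real.norm_eq_abs, abs_of_pos (Real.exp_pos _), Real.exp_le_exp]
        calc t * X ω ≤ |t * X ω| := le_abs_self _
        _ = t * |X ω| := by rw [abs_mul, abs_of_nonneg ht]
        _ ≤ t * c := by exact mul_le_mul_of_nonneg_left hω ht)⟩
  have hpt : ∀ᵐ ω ∂P, Real.exp (t * X ω)
      ≤ 1 + t * X ω + (t ^ 2 * (X ω) ^ 2) / (2 * (1 - t * c / 3)) := by
    filter_upwards [hb] with ω hω
    have := exp_quad_bound (x := t * X ω) (a := t * c)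
      (by rw [abs_mul, abs_of_nonneg ht]; exact mul_le_mul_of_nonneg_left hω ht) htc
    calc Real.exp (t * X ω) ≤ 1 + t * X ω + (t * X ω) ^ 2 / (2 * (1 - t * c / 3)) := this
    _ = 1 + t * X ω + (t ^ 2 * (X ω) ^ 2) / (2 * (1 - t * c / 3)) := by ring
  have hmgf : mgf X P t ≤ 1 + t ^ 2 * v / (2 * (1 - t * c / 3)) := by
    have i1 : Integrable (fun ω => 1 + t * X ω) P := by
      exact (integrable_const 1).add (hintX.const_mul t)
    have i2 : Integrable (fun ω => t ^ 2 * (X ω) ^ 2 / (2 * (1 - t * c / 3))) P := by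
      exact (hintX2.const_mul (t ^ 2)).div_const _
    have i12 : Integrable (fun ω => 1 + t * X ω + t ^ 2 * (X ω) ^ 2 / (2 * (1 - t * c / 3))) P := by
      exact i1.add i2
    have h1 : mgf X P t ≤ ∫ ω, (1 + t * X ω + (t ^ 2 * (X ω) ^ 2) / (2 * (1 - t * c / 3))) ∂P :=
      integral_mono_ae hintexp i12 hpt
    have h2 : ∫ ω, (1 + t * X ω + (t ^ 2 * (X ω) ^ 2) / (2 * (1 - t * c / 3))) ∂P
        = 1 + t * (∫ ω, X ω ∂P) + t ^ 2 * (∫ ω, (X ω) ^ 2 ∂P) / (2 * (1 - t * c / 3)) := by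
      rw [integral_add i1 i2, integral_add (integrable_const 1) (hintX.const_mul t),
        integral_div, integral_const_mul, integral_const_mul, integral_const]
      simp
    rw [h2, hcent] at h1
    have : t ^ 2 * (∫ ω, (X ω) ^ 2 ∂P) / (2 * (1 - t * c / 3))
        ≤ t ^ 2 * v / (2 * (1 - t * c / 3)) := by
      gcongr
    linarith
  calc mgf X P t ≤ 1 + t ^ 2 * v / (2 * (1 - t * c / 3)) := hmgf
  _ ≤ Real.exp (t ^ 2 * v / (2 * (1 - t * c / 3))) := by
    have := Real.add_one_le_exp (t ^ 2 * v / (2 * (1 - t * c / 3)))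
    linarith

lemma bernstein_sum {Ω : Type*} [MeasurableSpace Ω] {P : Measure Ω} [IsProbabilityMeasure P]
    {ι : Type*} (X : ι → Ω → ℝ) (hXm : ∀ n, Measurable (X n))
    (hind : iIndepFun X P)
    (Λ : Finset ι) (τ : ℕ) (hcard : Λ.card = τ) (hτ : 1 ≤ τ)
    {c v : ℝ} (hc : 0 ≤ c) (hv : 0 < v)
    (hcent : ∀ n ∈ Λ, ∫ ω, X n ω ∂P = 0)
    (hb : ∀ n ∈ Λ, ∀ᵐ ω ∂P, |X n ω| ≤ c)
    (hvar : ∀ n ∈ Λ, ∫ ω, (X n ω) ^ 2 ∂P ≤ v)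
    {ρ : ℝ} (hρ : 0 < ρ) :
    P {ω | ρ ≤ ∑ n ∈ Λ, X n ω}
      ≤ ENNReal.ofReal (Real.exp (-ρ ^ 2 / (2 * ((τ : ℝ) * v + c * ρ / 3)))) := by
  set D : ℝ := (τ : ℝ) * v + c * ρ / 3 with hD_def
  have hτ1 : (1 : ℝ) ≤ (τ : ℝ) := by exact_mod_cast hτ
  have hτv : 0 < (τ : ℝ) * v := by nlinarith
  have hD : 0 < D := by rw [hD_def]; nlinarith
  set t : ℝ := ρ / D with ht_def
  have ht : 0 < t := div_pos hρ hD
  have htc : t * c < 3 := by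
    have h3 : ρ * c < 3 * D := by rw [hD_def]; nlinarith [hτv]
    have : t * c = ρ * c / D := by rw [ht_def]; ring
    rw [this, div_lt_iff₀ hD]
    linarith
  have hone : 1 - t * c / 3 = (τ : ℝ) * v / D := by
    rw [ht_def]; field_simp; ring
  have hone_pos : 0 < 1 - t * c / 3 := by rw [hone]; positivity
  -- integrability of exp(t * X n)
  have hint : ∀ n ∈ Λ, Integrable (fun ω => Real.exp (t * X n ω)) P := by
    intro n hn
    refine ⟨(((hXm n).const_mul t).exp).aestronglyMeasurable,
      HasFiniteIntegral.of_bounded (C := Real.exp (t * c)) ?_⟩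
    filter_upwards [hb n hn] with ω hω
    rw [Real.norm_eq_abs, abs_of_pos (Real.exp_pos _), Real.exp_le_exp]
    calc t * X n ω ≤ |t * X n ω| := le_abs_self _
    _ = t * |X n ω| := by rw [abs_mul, abs_of_nonneg ht.le]
    _ ≤ t * c := mul_le_mul_of_nonneg_left hω ht.le
  have hintS : Integrable (fun ω => Real.exp (t * (∑ n ∈ Λ, X n) ω)) P :=
    hind.integrable_exp_mul_sum hXm hint
  have hcher := measure_ge_le_exp_mul_mgf (μ := P) (X := ∑ n ∈ Λ, X n) ρ ht.le hintS
  have hmgf_prod : mgf (∑ n ∈ Λ, X n) P t = ∏ n ∈ Λ, mgf (X n) P t :=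
    hind.mgf_sum hXm Λ
  have hprod_le : (∏ n ∈ Λ, mgf (X n) P t)
      ≤ Real.exp ((τ : ℝ) * (t ^ 2 * v / (2 * (1 - t * c / 3)))) := by
    calc (∏ n ∈ Λ, mgf (X n) P t)
        ≤ ∏ n ∈ Λ, Real.exp (t ^ 2 * v / (2 * (1 - t * c / 3))) := by
          refine Finset.prod_le_prod (fun n _ => mgf_nonneg) (fun n hn => ?_)
          exact mgf_bernstein P (X n) (hXm n) (hcent n hn) (hb n hn) (hvar n hn) ht.le htc
    _ = Real.exp ((τ : ℝ) * (t ^ 2 * v / (2 * (1 - t * c / 3)))) := by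
          rw [Finset.prod_const, hcard, ← Real.exp_nat_mul]
  have hkey : -t * ρ + (τ : ℝ) * (t ^ 2 * v / (2 * (1 - t * c / 3)))
      = -ρ ^ 2 / (2 * D) := by
    rw [hone, ht_def]
    field_simp
    ring
  have hfinal : (P {ω | ρ ≤ (∑ n ∈ Λ, X n) ω}).toReal
      ≤ Real.exp (-ρ ^ 2 / (2 * D)) := by
    calc (P {ω | ρ ≤ (∑ n ∈ Λ, X n) ω}).toReal
        ≤ Real.exp (-t * ρ) * mgf (∑ n ∈ Λ, X n) P t := hcher
    _ ≤ Real.exp (-t * ρ) * Real.exp ((τ : ℝ) * (t ^ 2 * v / (2 * (1 - t * c / 3)))) := by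
          rw [hmgf_prod]
          exact mul_le_mul_of_nonneg_left hprod_le (Real.exp_pos _).le
    _ = Real.exp (-t * ρ + (τ : ℝ) * (t ^ 2 * v / (2 * (1 - t * c / 3)))) :=
          (Real.exp_add _ _).symm
    _ = Real.exp (-ρ ^ 2 / (2 * D)) := by rw [hkey]
  have hset : {ω | ρ ≤ ∑ n ∈ Λ, X n ω} = {ω | ρ ≤ (∑ n ∈ Λ, X n) ω} := by
    simp [Finset.sum_apply]
  rw [hset]
  rw [ENNReal.le_ofReal_iff_toReal_le (measure_ne_top P _) (Real.exp_pos _).le]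
  exact hfinal

/-- Equation (21) of the paper: for `k ∉ Λ` with `|Λ| = τ ≥ 1` and a fixed vector `w`
with `|⟨A_k, w⟩| ≤ β`,
`Pr{ |⟨A_k, A s + w⟩| ≥ s_min/2 } ≤ 2·exp(−ρ²/(2(τν + cρ/3)))`,
where `ρ = s_min/2 − β > 0` and `s` is supported on `Λ`. -/
theorem omp_eq21 {M N : ℕ} (A : Matrix (Fin M) (Fin N) ℝ)
    (Λ : Finset (Fin N)) (τ : ℕ) (hcard : Λ.card = τ) (hτ : 1 ≤ τ)
    (k : Fin N) (hk : k ∉ Λ)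
    (w : Fin M → ℝ) (β : ℝ) (hβ : 0 ≤ β) (hw : |∑ m, A m k * w m| ≤ β)
    {Ω : Type*} [MeasurableSpace Ω] (P : Measure Ω) [IsProbabilityMeasure P]
    (s : Fin N → Ω → ℝ) (hmeas : ∀ n, Measurable (s n))
    (hindep : iIndepFun s P)
    (hcent : ∀ n, ∫ ω, s n ω ∂P = 0)
    (hzero : ∀ n ∉ Λ, ∀ᵐ ω ∂P, s n ω = 0)
    (c ν : ℝ) (hc : 0 ≤ c) (hν : 0 ≤ ν)
    (hbdd : ∀ n ∈ Λ, ∀ᵐ ω ∂P, |(∑ m, A m k * A m n) * s n ω| ≤ c)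
    (hvar : ∀ n ∈ Λ, ∫ ω, (∑ m, A m k * A m n) ^ 2 * (s n ω) ^ 2 ∂P ≤ ν)
    (smin ρ : ℝ) (hρ : ρ = smin / 2 - β) (hρpos : 0 < ρ) :
    P {ω | smin / 2 ≤ |∑ m, A m k * (A.mulVec (fun n => s n ω) m + w m)|}
      ≤ ENNReal.ofReal
          (2 * Real.exp (-ρ ^ 2 / (2 * ((τ : ℝ) * ν + c * ρ / 3)))) := by
  classical
  set μk : Fin N → ℝ := fun n => ∑ m, A m k * A m n with hμk
  set X : Fin N → Ω → ℝ := fun n ω => μk n * s n ω with hX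
  set W : ℝ := ∑ m, A m k * w m with hW
  -- algebraic identity
  have hsum_eq : ∀ ω, (∑ m, A m k * (A.mulVec (fun n => s n ω) m + w m))
      = (∑ n, X n ω) + W := by
    intro ω
    simp only [mul_add, Finset.sum_add_distrib, hW]
    congr 1
    simp only [Matrix.mulVec, dotProduct, Finset.mul_sum, hX, hμk]
    rw [Finset.sum_comm]
    refine Finset.sum_congr rfl fun n _ => ?_
    rw [Finset.sum_mul]
    refine Finset.sum_congr rfl fun m _ => ?_
    ring
  -- a.e. vanishing outside Λ
  have hae_out : ∀ᵐ ω ∂P, ∀ n ∉ Λ, s n ω = 0 := by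
    rw [MeasureTheory.ae_all_iff]
    intro n
    by_cases hn : n ∈ Λ
    · filter_upwards with ω h; exact absurd hn h
    · filter_upwards [hzero n hn] with ω h _; exact h
  have hae_sum : ∀ᵐ ω ∂P, (∑ n, X n ω) = ∑ n ∈ Λ, X n ω := by
    filter_upwards [hae_out] with ω hω
    refine (Finset.sum_subset (Finset.subset_univ Λ) fun n _ hn => ?_).symm
    simp [hX, hω n hn]
  have hβlt : β < smin / 2 := by linarith
  -- measurability etc.
  have hXm : ∀ n, Measurable (X n) := fun n => (hmeas n).const_mul (μk n)
  have hXind : iIndepFun X P := by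
    have := hindep.comp (fun n (x : ℝ) => μk n * x) (fun n => measurable_const_mul _)
    exact this
  -- event inclusion
  have hsubset : P {ω | smin / 2 ≤ |∑ m, A m k * (A.mulVec (fun n => s n ω) m + w m)|}
      ≤ P ({ω | ρ ≤ ∑ n ∈ Λ, X n ω} ∪ {ω | ρ ≤ ∑ n ∈ Λ, (fun n ω => -X n ω) n ω}) := by
    refine measure_mono_ae ?_
    filter_upwards [hae_sum] with ω hω hmem
    have h1 : smin / 2 ≤ |(∑ n ∈ Λ, X n ω) + W| := by
      rw [← hω, ← hsum_eq]; exact hmem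
    have h2 : ρ ≤ |∑ n ∈ Λ, X n ω| := by
      have habs := abs_add_le (∑ n ∈ Λ, X n ω) W
      linarith [h1, hw]
    rcases le_abs.mp h2 with h | h
    · exact Or.inl h
    · right
      simp only [Set.mem_setOf_eq]
      rw [Finset.sum_neg_distrib]
      exact h
  refine hsubset.trans ?_
  rcases eq_or_lt_of_le hν with hν0 | hνpos
  · -- degenerate case ν = 0 : all the variables vanish a.s.
    have hXzero : ∀ n ∈ Λ, ∀ᵐ ω ∂P, X n ω = 0 := by
      intro n hn
      have hint2 : Integrable (fun ω => (X n ω) ^ 2) P := by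
        refine ⟨((hXm n).pow_const 2).aestronglyMeasurable,
          HasFiniteIntegral.of_bounded (C := c ^ 2) ?_⟩
        filter_upwards [hbdd n hn] with ω hω
        simp only [Real.norm_eq_abs, abs_pow]
        nlinarith [abs_nonneg (X n ω)]
      have heq0 : ∫ ω, (X n ω) ^ 2 ∂P = 0 := by
        refine le_antisymm ?_ (integral_nonneg fun ω => sq_nonneg _)
        have := hvar n hn
        simp only [← hν0] at this
        calc ∫ ω, (X n ω) ^ 2 ∂P = ∫ ω, (μk n) ^ 2 * (s n ω) ^ 2 ∂P := by
              refine integral_congr_ae (Filter.Eventually.of_forall fun ω => ?_)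
              simp [hX, mul_pow]
        _ ≤ 0 := this
      have := (integral_eq_zero_iff_of_nonneg (fun ω => sq_nonneg (X n ω)) hint2).mp heq0
      filter_upwards [this] with ω hω
      have : (X n ω) ^ 2 = 0 := hω
      exact pow_eq_zero_iff (n := 2) (by norm_num) |>.mp this
    have hall : ∀ᵐ ω ∂P, ∀ n, n ∈ Λ → X n ω = 0 := by
      rw [MeasureTheory.ae_all_iff]
      intro n
      by_cases hn : n ∈ Λ
      · filter_upwards [hXzero n hn] with ω h _; exact h
      · filter_upwards with ω h; exact absurd h hn
    have hnull : P ({ω | ρ ≤ ∑ n ∈ Λ, X n ω}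
        ∪ {ω | ρ ≤ ∑ n ∈ Λ, (fun n ω => -X n ω) n ω}) = 0 := by
      rw [measure_eq_zero_iff_ae_notMem]
      filter_upwards [hall] with ω hω
      have hs0 : (∑ n ∈ Λ, X n ω) = 0 := Finset.sum_eq_zero fun n hn => hω n hn
      have hs0' : (∑ n ∈ Λ, (fun n ω => -X n ω) n ω) = 0 :=
        Finset.sum_eq_zero fun n hn => by simp [hω n hn]
      intro hmem
      rcases hmem with h | h
      · rw [Set.mem_setOf_eq, hs0] at h; linarith
      · rw [Set.mem_setOf_eq, hs0'] at h; linarith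
    rw [hnull]
    exact _root_.zero_le
  · -- main case ν > 0 : Bernstein's inequality on both tails
    have hcent' : ∀ n ∈ Λ, ∫ ω, X n ω ∂P = 0 := by
      intro n hn
      simp only [hX]
      rw [integral_const_mul, hcent n, mul_zero]
    have hvar' : ∀ n ∈ Λ, ∫ ω, (X n ω) ^ 2 ∂P ≤ ν := by
      intro n hn
      calc ∫ ω, (X n ω) ^ 2 ∂P = ∫ ω, (μk n) ^ 2 * (s n ω) ^ 2 ∂P := by
            refine integral_congr_ae (Filter.Eventually.of_forall fun ω => ?_)
            simp [hX, mul_pow]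
      _ ≤ ν := hvar n hn
    have h1 := bernstein_sum X hXm hXind Λ τ hcard hτ hc hνpos hcent' hbdd hvar' hρpos
    have hXm' : ∀ n, Measurable (fun ω => -X n ω) := fun n => (hXm n).neg
    have hXind' : iIndepFun (fun n ω => -X n ω) P := by
      have := hXind.comp (fun n (x : ℝ) => -x) (fun n => measurable_neg)
      exact this
    have hcent'' : ∀ n ∈ Λ, ∫ ω, -X n ω ∂P = 0 := by
      intro n hn
      rw [integral_neg, hcent' n hn, neg_zero]
    have hbdd'' : ∀ n ∈ Λ, ∀ᵐ ω ∂P, |-X n ω| ≤ c := by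
      intro n hn
      filter_upwards [hbdd n hn] with ω hω
      rwa [abs_neg]
    have hvar'' : ∀ n ∈ Λ, ∫ ω, (-X n ω) ^ 2 ∂P ≤ ν := by
      intro n hn
      simpa [neg_sq] using hvar' n hn
    have h2 := bernstein_sum (fun n ω => -X n ω) hXm' hXind' Λ τ hcard hτ hc hνpos
      hcent'' hbdd'' hvar'' hρpos
    calc P ({ω | ρ ≤ ∑ n ∈ Λ, X n ω} ∪ {ω | ρ ≤ ∑ n ∈ Λ, (fun n ω => -X n ω) n ω})
        ≤ P {ω | ρ ≤ ∑ n ∈ Λ, X n ω} + P {ω | ρ ≤ ∑ n ∈ Λ, (fun n ω => -X n ω) n ω} :=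
          measure_union_le _ _
    _ ≤ ENNReal.ofReal (Real.exp (-ρ ^ 2 / (2 * ((τ : ℝ) * ν + c * ρ / 3))))
        + ENNReal.ofReal (Real.exp (-ρ ^ 2 / (2 * ((τ : ℝ) * ν + c * ρ / 3)))) :=
          add_le_add h1 h2
    _ = ENNReal.ofReal (2 * Real.exp (-ρ ^ 2 / (2 * ((τ : ℝ) * ν + c * ρ / 3)))) := by
          rw [← ENNReal.ofReal_add (Real.exp_pos _).le (Real.exp_pos _).le]
          congr 1
          ring
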